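/- Let A_1,…,A_k (k ≥ 1) be pairwise commuting V×V matrices with nonnegative integer entries, each with no zero row and no zero column, such that every vertex lies in a nontrivial strongly connected component and every strongly connected component is coordinatewise irreducible. Assume that for all strongly connected components C and D the following holds: if there exist j ∈ {1,…,k}, m ∈ ℕ, v ∈ C and w ∈ D with (A_j^m)(v,w) > 0, then for every i ∈ {1,…,k} there exist m' ∈ ℕ, v' ∈ C and w' ∈ D with (A_i^{m'})(v',w') > 0. Then for all vertices v, w: if v reaches w (i.e. A^n(v,w) > 0 for some n : {1,…,k} → ℕ), then for every i ∈ {1,…,k} there exists m ∈ ℕ with (A_i^m)(v,w) > 0. -/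
import Mathlib


open Matrix

variable {V : Type*} [Fintype V] [DecidableEq V]

/-- `Apow A n = ∏ i, (A i)^(n i)`, the vertex matrix counting paths of degree `n`. -/
def Apow {k : ℕ} (A : Fin k → Matrix V V ℕ) (n : Fin k → ℕ) : Matrix V V ℕ :=
  ((List.finRange k).map fun i => (A i) ^ (n i)).prod

/-- `v` reaches `w` if some `A^n` has a positive `(v, w)` entry. -/
def Reaches {k : ℕ} (A : Fin k → Matrix V V ℕ) (v w : V) : Prop :=
  ∃ n : Fin k → ℕ, 0 < Apow A n v w

/-- `C` is a strongly connected component: the equivalence class of some vertex `v`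
for the relation `v` reaches `w` and `w` reaches `v`. -/
def IsSCC {k : ℕ} (A : Fin k → Matrix V V ℕ) (C : Finset V) : Prop :=
  ∃ v : V, ∀ w : V, w ∈ C ↔ (Reaches A v w ∧ Reaches A w v)

/-- A component is nontrivial if it contains a vertex with a loop of nonzero degree. -/
def NontrivialComp {k : ℕ} (A : Fin k → Matrix V V ℕ) (C : Finset V) : Prop :=
  ∃ v ∈ C, ∃ n : Fin k → ℕ, n ≠ 0 ∧ 0 < Apow A n v v

/-- A component is coordinatewise irreducible if for each colour `i` and all `v, w ∈ C`
there is `m ≥ 1` with `(A_i^m)(v, w) > 0`. -/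
def CoordIrreducible {k : ℕ} (A : Fin k → Matrix V V ℕ) (C : Finset V) : Prop :=
  ∀ i : Fin k, ∀ v ∈ C, ∀ w ∈ C, ∃ m : ℕ, 1 ≤ m ∧ 0 < ((A i) ^ m) v w

/-- A subset `S` is hereditary if `v ∈ S` and `v` reaches `w` imply `w ∈ S`. -/
def Hereditary {k : ℕ} (A : Fin k → Matrix V V ℕ) (S : Finset V) : Prop :=
  ∀ v ∈ S, ∀ w : V, Reaches A v w → w ∈ S

/-- The spectral radius of a square matrix of natural numbers: the maximum modulus of
its complex eigenvalues. -/
noncomputable def specRadN {n : Type*} [Fintype n] [DecidableEq n] (M : Matrix n n ℕ) : ℝ :=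
  (spectralRadius ℂ (M.map (Nat.cast : ℕ → ℂ))).toReal

/-- `compRad A C i` is the spectral radius of the `C × C` submatrix of `A i`. -/
noncomputable def compRad {k : ℕ} (A : Fin k → Matrix V V ℕ) (C : Finset V) (i : Fin k) : ℝ :=
  specRadN ((A i).submatrix (fun c : {x // x ∈ C} => c.1) (fun c : {x // x ∈ C} => c.1))


lemma mul_entry_pos' {M N : Matrix V V ℕ} {v u w : V} (h1 : 0 < M v u) (h2 : 0 < N u w) :
    0 < (M * N) v w := by
  rw [Matrix.mul_apply]
  exact lt_of_lt_of_le (Nat.mul_pos h1 h2)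
    (Finset.single_le_sum (f := fun j => M v j * N j w) (fun i _ => Nat.zero_le _) (Finset.mem_univ u))

lemma entry_pos_exists' {M N : Matrix V V ℕ} {v w : V} (h : 0 < (M * N) v w) :
    ∃ u, 0 < M v u ∧ 0 < N u w := by
  rw [Matrix.mul_apply] at h
  obtain ⟨u, -, hu⟩ := Finset.exists_ne_zero_of_sum_ne_zero (Nat.pos_iff_ne_zero.mp h)
  obtain ⟨h1, h2⟩ := mul_ne_zero_iff.mp hu
  exact ⟨u, Nat.pos_of_ne_zero h1, Nat.pos_of_ne_zero h2⟩

/-- Lemma 3.3 of the paper: if every vertex lies in a nontrivial strongly connected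
component, every component is coordinatewise irreducible, and any two components that are
connected in one colour are connected in every colour, then `v` reaches `w` implies that
`v` reaches `w` by paths of a single colour, for every colour. -/
theorem reaches_in_every_colour {V : Type*} [Fintype V] [DecidableEq V] [Nonempty V]
    {k : ℕ} (hk : 1 ≤ k)
    (A : Fin k → Matrix V V ℕ)
    (hcomm : ∀ i j, A i * A j = A j * A i)
    (hrow : ∀ i v, ∃ w, A i v w ≠ 0)
    (hcol : ∀ i v, ∃ w, A i w v ≠ 0)
    (hcover : ∀ v : V, ∃ C : Finset V, IsSCC A C ∧ v ∈ C ∧ NontrivialComp A C)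
    (hirr : ∀ C : Finset V, IsSCC A C → CoordIrreducible A C)
    (hconn : ∀ C D : Finset V, IsSCC A C → IsSCC A D →
      (∃ j : Fin k, ∃ m : ℕ, ∃ v ∈ C, ∃ w ∈ D, 0 < ((A j) ^ m) v w) →
      ∀ i : Fin k, ∃ m : ℕ, ∃ v ∈ C, ∃ w ∈ D, 0 < ((A i) ^ m) v w) :
    ∀ v w : V, Reaches A v w → ∀ i : Fin k, ∃ m : ℕ, 0 < ((A i) ^ m) v w := by
  have single : ∀ (j : Fin k) (p : ℕ) (v u : V), 0 < ((A j) ^ p) v u →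
      ∀ i : Fin k, ∃ m : ℕ, 0 < ((A i) ^ m) v u := by
    intro j p v u h i
    obtain ⟨C, hC, hvC, -⟩ := hcover v
    obtain ⟨D, hD, huD, -⟩ := hcover u
    obtain ⟨m, v', hv', w', hw', hpos⟩ := hconn C D hC hD ⟨j, p, v, hvC, u, huD, h⟩ i
    obtain ⟨a, -, ha⟩ := hirr C hC i v hvC v' hv'
    obtain ⟨b, -, hb⟩ := hirr D hD i w' hw' u huD
    refine ⟨a + m + b, ?_⟩
    rw [pow_add, pow_add]
    exact mul_entry_pos' (mul_entry_pos' ha hpos) hb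
  have key : ∀ (L : List (Fin k)) (n : Fin k → ℕ) (v w : V),
      0 < (L.map fun i => (A i) ^ (n i)).prod v w → ∀ i : Fin k, ∃ m : ℕ, 0 < ((A i) ^ m) v w := by
    intro L
    induction L with
    | nil =>
      intro n v w h i
      simp only [List.map_nil, List.prod_nil] at h
      have hvw : v = w := by
        by_contra hne
        rw [Matrix.one_apply_ne hne] at h
        exact lt_irrefl 0 h
      exact ⟨0, by simp [hvw, Matrix.one_apply_eq]⟩
    | cons j L ih =>
      intro n v w h i
      rw [List.map_cons, List.prod_cons] at h
      obtain ⟨u, h1, h2⟩ := entry_pos_exists' h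
      obtain ⟨m1, hm1⟩ := single j (n j) v u h1 i
      obtain ⟨m2, hm2⟩ := ih n u w h2 i
      exact ⟨m1 + m2, by rw [pow_add]; exact mul_entry_pos' hm1 hm2⟩
  rintro v w ⟨n, hn⟩ i
  exact key (List.finRange k) n v w hn i
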